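/- arXiv:2401.11917 — 2 statements merged into one kernel-verified Lean document; each statement's English description precedes it below -/
import Mathlib

section
/- An element F ∈ C¹ lies in the image d(C⁰) (i.e., F = f′ for some f ∈ L[v] with f(0), f(1) ∈ ℂ[[z]]) if and only if ∫₀¹F ∈ ℂ[[z]], i.e. every coefficient of a strictly negative power of z in ∫₀¹F = Σ_k F_k/(k+1) vanishes. (In particular the closed 1-forms z^{-k} dv, k ≥ 1, are not exact in ℂ{{z}}.) -/
/-!
Exactness criterion in degree one for `ℂ{{z}}`: a 1-form `F dv` with
`F ∈ C¹ = ℂ((z))[v]` is exact (i.e. `F = f′` for some `f ∈ C⁰`) iff `∫₀¹ F ∈ ℂ[[z]]`.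
-/

noncomputable section

open Polynomial

/-- Membership in `ℂ[[z]] ⊆ ℂ((z))`: all coefficients in strictly negative degrees vanish. -/
def inP (x : LaurentSeries ℂ) : Prop := ∀ n : ℤ, n < 0 → x.coeff n = 0

/-- `∫₀¹ F` for `F = Σ_k F_k v^k`, namely `Σ_k F_k / (k+1)`. -/
def intg (F : Polynomial (LaurentSeries ℂ)) : LaurentSeries ℂ :=
  ∑ k ∈ Finset.range (F.natDegree + 1), F.coeff k / ((k : LaurentSeries ℂ) + 1)

/-- `k + 1` is a nonzero scalar in `ℂ((z))`. -/
lemma kne (k : ℕ) : ((k : LaurentSeries ℂ) + 1) ≠ 0 := by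
  have h : ((k : ℂ) + 1) ≠ 0 := Nat.cast_add_one_ne_zero k
  intro h0
  apply h
  have hC : HahnSeries.C ((k : ℂ) + 1) = (0 : LaurentSeries ℂ) := by
    rw [map_add, map_natCast, map_one, h0]
  simpa using congrArg (fun x : LaurentSeries ℂ => x.coeff 0) hC

/-- The integral can be computed by summing over any sufficiently large range. -/
lemma intg_ext (F : Polynomial (LaurentSeries ℂ)) (M : ℕ) (h : F.natDegree < M) :
    intg F = ∑ k ∈ Finset.range M, F.coeff k / ((k : LaurentSeries ℂ) + 1) := by
  apply Finset.sum_subset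
  · exact Finset.range_subset_range.mpr h
  · intro k _ hk
    simp only [Finset.mem_range, not_lt] at hk
    rw [coeff_eq_zero_of_natDegree_lt (by omega), zero_div]

/-- Fundamental theorem of calculus for `intg`: `∫₀¹ f′ = f(1) - f(0)`. -/
lemma intg_derivative (f : Polynomial (LaurentSeries ℂ)) :
    intg (derivative f) = f.eval 1 - f.eval 0 := by
  rw [intg_ext (derivative f) (f.natDegree + 1)
      (Nat.lt_succ_of_le (le_trans (natDegree_derivative_le f) (Nat.sub_le _ _)))]
  have h1 : ∀ k ∈ Finset.range (f.natDegree + 1),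
      (derivative f).coeff k / ((k : LaurentSeries ℂ) + 1) = f.coeff (k + 1) := by
    intro k _
    rw [coeff_derivative, mul_div_assoc]
    rw [div_self (kne k), mul_one]
  rw [Finset.sum_congr rfl h1]
  have e1 : f.eval 1 = ∑ k ∈ Finset.range (f.natDegree + 2), f.coeff k := by
    rw [eval_eq_sum_range' (by omega : f.natDegree < f.natDegree + 2)]
    simp
  rw [Finset.sum_range_succ'] at e1
  have h0 : f.eval 0 = f.coeff 0 := (coeff_zero_eq_eval_zero f).symm
  rw [e1, h0]
  ring

/-- `F ∈ C¹` lies in `d(C⁰)` if and only if `∫₀¹ F` has no strictly negative powers of `z`,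
i.e. `∫₀¹ F ∈ ℂ[[z]]`. -/
theorem raviolo_exactness_criterion (F : Polynomial (LaurentSeries ℂ)) :
    (∃ f : Polynomial (LaurentSeries ℂ),
        inP (f.eval 0) ∧ inP (f.eval 1) ∧ F = derivative f) ↔ inP (intg F) := by
  constructor
  · rintro ⟨f, h0, h1, rfl⟩
    intro n hn
    rw [intg_derivative, HahnSeries.coeff_sub, h1 n hn, h0 n hn, sub_zero]
  · intro h
    refine ⟨∑ k ∈ Finset.range (F.natDegree + 1),
      C (F.coeff k / ((k : LaurentSeries ℂ) + 1)) * X ^ (k + 1), ?_, ?_, ?_⟩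
    · have h0 : (∑ k ∈ Finset.range (F.natDegree + 1),
          C (F.coeff k / ((k : LaurentSeries ℂ) + 1)) * X ^ (k + 1)).eval 0 = 0 := by
        rw [eval_finset_sum]; simp
      rw [h0]; intro n _; simp
    · have heval : (∑ k ∈ Finset.range (F.natDegree + 1),
          C (F.coeff k / ((k : LaurentSeries ℂ) + 1)) * X ^ (k + 1)).eval 1 = intg F := by
        rw [eval_finset_sum, intg]
        simp
      rw [heval]; exact h
    · rw [map_sum]
      conv_lhs => rw [F.as_sum_range]
      apply Finset.sum_congr rfl
      intro k _
      rw [derivative_C_mul_X_pow]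
      push_cast
      rw [div_mul_cancel₀ _ (kne k), C_mul_X_pow_eq_monomial]

end
end

section
/- One has P_s(Σ_{τ ∈ S_{N+1} : s precedes N+1 in τ} u_τ) = v · Σ_{σ ∈ S_N} u_σ, where 's precedes N+1 in τ' means the position of s in τ is smaller than that of N+1. Consequently, modulo the ideals generated by Σ_{σ∈S_N} u_σ − 1 and Σ_{τ∈S_{N+1}} u_τ − 1 respectively, the algebra map q_s (determined by v ↦ Σ_{τ : s precedes N+1 in τ} u_τ and u_σ ↦ Σ_{τ ∈ π_N^{-1}(σ)} u_τ) is a section of P_s: the composite P_s ∘ q_s is the identity on the quotient ring ℂ[v][u_σ : σ ∈ S_N]/⟨Σ_σ u_σ − 1⟩. -/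
/-!
`P_s(Σ_{τ : s precedes N+1} u_τ) = v · Σ_σ u_σ`, and consequently, modulo the ideal
generated by `Σ_σ u_σ - 1`, the algebra map `q_s` (with `v ↦ Σ_{τ : s precedes N+1} u_τ`
and `u_σ ↦ Σ_{τ ∈ π_N⁻¹(σ)} u_τ`) is a section of `P_s`.
-/

noncomputable section

open scoped Classical

/-- Total orders on `{1,…,n}` are identified with bijections `τ : Fin n ≃ Fin n`,
`τ k` being the `k`-th smallest element. -/
abbrev TotalOrd (n : ℕ) := Equiv.Perm (Fin n)

/-- `a` immediately precedes `b` in `τ`: they occupy consecutive positions `k, k+1`. -/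
def immPrec {n : ℕ} (τ : TotalOrd (n + 1)) (a b : Fin (n + 1)) : Prop :=
  ∃ k : Fin n, τ k.castSucc = a ∧ τ k.succ = b

/-- `a` precedes `b` in `τ`: the position of `a` is smaller than that of `b`. -/
def prec {n : ℕ} (τ : TotalOrd n) (a b : Fin n) : Prop := τ.symm a < τ.symm b

/-- `π_N : S_{N+1} → S_N`: delete the entry `N+1`. -/
def delLast {N : ℕ} (τ : TotalOrd (N + 1)) : TotalOrd N :=
  Tuple.sort (fun a : Fin N => τ.symm a.castSucc)

variable {N : ℕ}

/-- Insert `N+1` at position `j` into the order `σ`. -/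
def ins (σ : TotalOrd N) (j : Fin (N + 1)) : TotalOrd (N + 1) :=
  (finSuccEquiv' j).trans ((Equiv.optionCongr σ).trans (finSuccEquiv' (Fin.last N)).symm)

lemma ins_apply_self (σ : TotalOrd N) (j : Fin (N + 1)) : ins σ j j = Fin.last N := by
  simp [ins, finSuccEquiv'_at, finSuccEquiv'_symm_none]

lemma ins_apply_succAbove (σ : TotalOrd N) (j : Fin (N + 1)) (k : Fin N) :
    ins σ j (j.succAbove k) = (σ k).castSucc := by
  simp [ins, finSuccEquiv'_succAbove, finSuccEquiv'_symm_some, Fin.succAbove_last]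

lemma ins_symm_castSucc (σ : TotalOrd N) (j : Fin (N + 1)) (a : Fin N) :
    (ins σ j).symm a.castSucc = j.succAbove (σ.symm a) := by
  rw [Equiv.symm_apply_eq, ins_apply_succAbove, Equiv.apply_symm_apply]

lemma ins_symm_last (σ : TotalOrd N) (j : Fin (N + 1)) :
    (ins σ j).symm (Fin.last N) = j := by
  rw [Equiv.symm_apply_eq, ins_apply_self]

lemma delLast_ins (σ : TotalOrd N) (j : Fin (N + 1)) : delLast (ins σ j) = σ := by
  symm
  rw [delLast, Tuple.eq_sort_iff]
  have h : ∀ k, (ins σ j).symm ((σ k).castSucc) = j.succAbove k := by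
    intro k; rw [ins_symm_castSucc, Equiv.symm_apply_apply]
  constructor
  · intro a b hab
    simp only [Function.comp_apply, h]
    exact ((Fin.strictMono_succAbove j).monotone) hab
  · intro a b hab heq
    exfalso
    simp only [Function.comp_apply, h] at heq
    exact hab.ne (Fin.succAbove_right_injective heq)

lemma pos_delLast (τ : TotalOrd (N + 1)) (k : Fin N) :
    τ.symm ((delLast τ k).castSucc) = (τ.symm (Fin.last N)).succAbove k := by
  set j := τ.symm (Fin.last N)
  set f : Fin N → Fin (N + 1) := fun a => τ.symm a.castSucc with hf
  have hinj : Function.Injective (f ∘ delLast τ) :=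
    τ.symm.injective.comp (Fin.castSucc_injective N) |>.comp (delLast τ).injective
  have hmono : StrictMono (f ∘ delLast τ) :=
    (Tuple.monotone_sort f).strictMono_of_injective hinj
  have hrange : Set.range (f ∘ delLast τ) = Set.range j.succAbove := by
    rw [Fin.range_succAbove]
    apply Set.eq_of_subset_of_ncard_le
    · rintro x ⟨k, rfl⟩
      simp only [Set.mem_compl_iff, Set.mem_singleton_iff, Function.comp_apply, hf]
      intro h
      have := congrArg τ h
      simp only [Equiv.apply_symm_apply, j] at this
      exact absurd this (Fin.castSucc_lt_last _).ne
    · rw [← Set.image_univ, Set.ncard_image_of_injective _ hinj]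
      have h1 : ({j}ᶜ : Set (Fin (N+1))).ncard = N := by
        rw [← Nat.card_coe_set_eq]
        simp only [Nat.card_eq_fintype_card, Fintype.card_compl_set,
          Set.card_singleton, Fintype.card_fin]
        omega
      have h2 : (Set.univ : Set (Fin N)).ncard = N := by
        rw [Set.ncard_univ, Nat.card_eq_fintype_card, Fintype.card_fin]
      omega
    · exact Set.toFinite _
  have := (hmono.range_inj (Fin.strictMono_succAbove j)).mp hrange
  exact congrFun this k

lemma ins_delLast (τ : TotalOrd (N + 1)) :
    ins (delLast τ) (τ.symm (Fin.last N)) = τ := by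
  set j := τ.symm (Fin.last N)
  apply Equiv.ext
  intro x
  rcases eq_or_ne x j with rfl | hx
  · rw [ins_apply_self]
    exact (Equiv.apply_symm_apply _ _).symm
  · obtain ⟨k, rfl⟩ := Fin.exists_succAbove_eq hx
    rw [ins_apply_succAbove]
    have h1 := congrArg τ (pos_delLast τ k).symm
    simp only [Equiv.apply_symm_apply] at h1
    exact h1.symm

/-- The insertion equivalence. -/
def insEquiv : (TotalOrd N × Fin (N + 1)) ≃ TotalOrd (N + 1) where
  toFun p := ins p.1 p.2
  invFun τ := (delLast τ, τ.symm (Fin.last N))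
  left_inv p := by simp [delLast_ins, ins_symm_last]
  right_inv τ := ins_delLast τ

lemma ins_apply_eq_last_iff {σ : TotalOrd N} {j x : Fin (N + 1)} :
    ins σ j x = Fin.last N ↔ x = j := by
  rw [← ins_apply_self σ j, (ins σ j).apply_eq_iff_eq]

lemma ins_apply_eq_castSucc_iff {σ : TotalOrd N} {j : Fin (N + 1)} {x : Fin (N + 1)}
    {s : Fin N} : ins σ j x = s.castSucc ↔ x = j.succAbove (σ.symm s) := by
  rw [show s.castSucc = ins σ j (j.succAbove (σ.symm s)) by
        rw [ins_apply_succAbove, Equiv.apply_symm_apply],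
      (ins σ j).apply_eq_iff_eq]

lemma immPrec_ins_sl {σ : TotalOrd N} {j : Fin (N + 1)} {s : Fin N} :
    immPrec (ins σ j) s.castSucc (Fin.last N) ↔ j = (σ.symm s).succ := by
  constructor
  · rintro ⟨k, h1, h2⟩
    rw [ins_apply_eq_castSucc_iff] at h1
    rw [ins_apply_eq_last_iff] at h2
    set i := σ.symm s
    subst h2
    -- h1 : k.castSucc = k.succ.succAbove i
    rcases lt_or_ge i.castSucc k.succ with h | h
    · rw [Fin.succAbove_of_castSucc_lt _ _ h] at h1
      have : (k : ℕ) = (i : ℕ) := by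
        have := congrArg Fin.val h1
        simpa using this
      ext
      simp [Fin.val_succ, this]
    · rw [Fin.succAbove_of_le_castSucc _ _ h] at h1
      have h1' := congrArg Fin.val h1
      have h' : (k : ℕ) + 1 ≤ (i : ℕ) := by simpa using h
      simp only [Fin.coe_castSucc, Fin.val_succ] at h1'
      omega
  · rintro rfl
    refine ⟨σ.symm s, ?_, ins_apply_eq_last_iff.mpr rfl⟩
    rw [ins_apply_eq_castSucc_iff]
    rw [Fin.succAbove_of_castSucc_lt _ _ (Fin.castSucc_lt_succ (i := _))]

lemma immPrec_ins_ls {σ : TotalOrd N} {j : Fin (N + 1)} {s : Fin N} :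
    immPrec (ins σ j) (Fin.last N) s.castSucc ↔ j = (σ.symm s).castSucc := by
  constructor
  · rintro ⟨k, h1, h2⟩
    rw [ins_apply_eq_last_iff] at h1
    rw [ins_apply_eq_castSucc_iff] at h2
    set i := σ.symm s
    subst h1
    -- h2 : k.succ = k.castSucc.succAbove i
    rcases lt_or_ge i.castSucc k.castSucc with h | h
    · rw [Fin.succAbove_of_castSucc_lt _ _ h] at h2
      have := congrArg Fin.val h2
      have h' := (Fin.castSucc_lt_castSucc_iff.mp h)
      simp only [Fin.val_succ, Fin.coe_castSucc] at this
      have : (i:ℕ) < (k:ℕ) := h'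
      omega
    · rw [Fin.succAbove_of_le_castSucc _ _ h] at h2
      have := congrArg Fin.val h2
      simp only [Fin.val_succ] at this
      ext
      simp only [Fin.coe_castSucc]
      omega
  · rintro rfl
    refine ⟨σ.symm s, ins_apply_eq_last_iff.mpr rfl, ?_⟩
    rw [ins_apply_eq_castSucc_iff]
    rw [Fin.succAbove_of_le_castSucc _ _ le_rfl]

lemma prec_ins {σ : TotalOrd N} {j : Fin (N + 1)} {s : Fin N} :
    prec (ins σ j) s.castSucc (Fin.last N) ↔ (σ.symm s).castSucc < j := by
  rw [prec, ins_symm_castSucc, ins_symm_last]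
  set i := σ.symm s
  rcases lt_or_ge i.castSucc j with h | h
  · rw [Fin.succAbove_of_castSucc_lt _ _ h]
  · rw [Fin.succAbove_of_le_castSucc _ _ h]
    refine iff_of_false ?_ (not_lt.mpr h)
    intro h'
    have h1 : (j:ℕ) ≤ (i:ℕ) := by simpa [Fin.le_def] using h
    have h2 : (i:ℕ) + 1 < (j:ℕ) := by simpa [Fin.lt_def] using h'
    omega

/-- The algebra map `P_s : ℂ[u_τ : τ ∈ S_{N+1}] → ℂ[v][u_σ : σ ∈ S_N]`. -/
def Ps (N : ℕ) (s : Fin N) :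
    MvPolynomial (TotalOrd (N + 1)) ℂ →ₐ[ℂ]
      Polynomial (MvPolynomial (TotalOrd N) ℂ) :=
  MvPolynomial.aeval fun τ : TotalOrd (N + 1) =>
    if immPrec τ (Fin.last N) s.castSucc then
      (1 - Polynomial.X) * Polynomial.C (MvPolynomial.X (delLast τ))
    else if immPrec τ s.castSucc (Fin.last N) then
      Polynomial.X * Polynomial.C (MvPolynomial.X (delLast τ))
    else 0

lemma Ps_X (s : Fin N) (τ : TotalOrd (N + 1)) :
    Ps N s (MvPolynomial.X τ) =
      if immPrec τ (Fin.last N) s.castSucc then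
        (1 - Polynomial.X) * Polynomial.C (MvPolynomial.X (delLast τ))
      else if immPrec τ s.castSucc (Fin.last N) then
        Polynomial.X * Polynomial.C (MvPolynomial.X (delLast τ))
      else 0 := by
  simp [Ps]

lemma Ps_X_ins (s : Fin N) (σ : TotalOrd N) (j : Fin (N + 1)) :
    Ps N s (MvPolynomial.X (ins σ j)) =
      if j = (σ.symm s).castSucc then
        (1 - Polynomial.X) * Polynomial.C (MvPolynomial.X σ)
      else if j = (σ.symm s).succ then
        Polynomial.X * Polynomial.C (MvPolynomial.X σ)
      else 0 := by
  rw [Ps_X, delLast_ins]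
  simp only [immPrec_ins_ls, immPrec_ins_sl]

lemma part1 (s : Fin N) :
    Ps N s (∑ τ ∈ Finset.univ.filter
        (fun τ : TotalOrd (N + 1) => prec τ s.castSucc (Fin.last N)), MvPolynomial.X τ)
      = Polynomial.X * Polynomial.C (∑ σ : TotalOrd N, MvPolynomial.X σ) := by
  rw [map_sum, Finset.sum_filter]
  rw [← Fintype.sum_equiv (insEquiv (N := N))
    (fun p => if prec (ins p.1 p.2) s.castSucc (Fin.last N)
        then Ps N s (MvPolynomial.X (ins p.1 p.2)) else 0)
    (fun τ => if prec τ s.castSucc (Fin.last N) then Ps N s (MvPolynomial.X τ) else 0)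
    (fun p => rfl)]
  rw [Fintype.sum_prod_type, map_sum, Finset.mul_sum]
  refine Finset.sum_congr rfl fun σ _ => ?_
  rw [Finset.sum_eq_single_of_mem ((σ.symm s).succ) (Finset.mem_univ _)]
  · rw [if_pos (prec_ins.mpr (Fin.castSucc_lt_succ (i := _))), Ps_X_ins,
      if_neg (Fin.castSucc_lt_succ (i := σ.symm s)).ne', if_pos rfl]
  · intro j _ hj
    by_cases hp : prec (ins σ j) s.castSucc (Fin.last N)
    · rw [if_pos hp, Ps_X_ins, if_neg, if_neg hj]
      exact fun h => absurd (prec_ins.mp hp)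
        (by rw [show j = ((Equiv.symm σ) s).castSucc from h]; exact lt_irrefl _)
    · rw [if_neg hp]

lemma partB (s : Fin N) (σ : TotalOrd N) :
    Ps N s (∑ τ ∈ Finset.univ.filter (fun τ => delLast τ = σ), MvPolynomial.X τ)
      = Polynomial.C (MvPolynomial.X σ) := by
  rw [map_sum, Finset.sum_filter]
  rw [← Fintype.sum_equiv (insEquiv (N := N))
    (fun p => if delLast (ins p.1 p.2) = σ then Ps N s (MvPolynomial.X (ins p.1 p.2)) else 0)
    (fun τ => if delLast τ = σ then Ps N s (MvPolynomial.X τ) else 0)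
    (fun p => rfl)]
  rw [Fintype.sum_prod_type]
  rw [Finset.sum_eq_single_of_mem σ (Finset.mem_univ _)]
  · simp only [delLast_ins, if_true]
    rw [← Finset.sum_subset (Finset.subset_univ
        ({(σ.symm s).castSucc, (σ.symm s).succ} : Finset (Fin (N + 1))))
      (fun j _ hj => ?_)]
    · rw [Finset.sum_pair (Fin.castSucc_lt_succ (i := σ.symm s)).ne]
      rw [Ps_X_ins, if_pos rfl, Ps_X_ins,
        if_neg (Fin.castSucc_lt_succ (i := σ.symm s)).ne', if_pos rfl]
      ring
    · simp only [Finset.mem_insert, Finset.mem_singleton, not_or] at hj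
      rw [Ps_X_ins, if_neg hj.1, if_neg hj.2]
  · intro σ' _ hσ'
    apply Finset.sum_eq_zero
    intro j _
    rw [delLast_ins, if_neg hσ']

/-- The algebra map `q_s : ℂ[v][u_σ : σ ∈ S_N] → ℂ[u_τ : τ ∈ S_{N+1}]` determined by
`v ↦ Σ_{τ : s precedes N+1 in τ} u_τ` and `u_σ ↦ Σ_{τ ∈ π_N⁻¹(σ)} u_τ`. -/
def qs (N : ℕ) (s : Fin N) :
    Polynomial (MvPolynomial (TotalOrd N) ℂ) →+* MvPolynomial (TotalOrd (N + 1)) ℂ :=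
  Polynomial.eval₂RingHom
    (MvPolynomial.aeval fun σ : TotalOrd N =>
      (∑ τ ∈ Finset.univ.filter (fun τ => delLast τ = σ), MvPolynomial.X τ) :
        MvPolynomial (TotalOrd N) ℂ →ₐ[ℂ] MvPolynomial (TotalOrd (N + 1)) ℂ).toRingHom
    (∑ τ ∈ Finset.univ.filter
        (fun τ : TotalOrd (N + 1) => prec τ s.castSucc (Fin.last N)), MvPolynomial.X τ)

/-- `P_s(Σ_{τ : s ≺_τ N+1} u_τ) = v · Σ_σ u_σ`, and modulo the ideal generated by
`Σ_σ u_σ - 1`, the composite `P_s ∘ q_s` is the identity. -/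
theorem Ps_qs_section (N : ℕ) (s : Fin N) :
    Ps N s (∑ τ ∈ Finset.univ.filter
        (fun τ : TotalOrd (N + 1) => prec τ s.castSucc (Fin.last N)), MvPolynomial.X τ)
      = Polynomial.X * Polynomial.C (∑ σ : TotalOrd N, MvPolynomial.X σ)
    ∧ ∀ p : Polynomial (MvPolynomial (TotalOrd N) ℂ),
        Ps N s (qs N s p) - p ∈
          Ideal.span {Polynomial.C (∑ σ : TotalOrd N, MvPolynomial.X σ) - 1} := by
  refine ⟨part1 s, fun p => ?_⟩
  set I : Ideal (Polynomial (MvPolynomial (TotalOrd N) ℂ)) :=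
    Ideal.span {Polynomial.C (∑ σ : TotalOrd N, MvPolynomial.X σ) - 1}
  set Q := Ideal.Quotient.mk I
  have hC : ∀ m : MvPolynomial (TotalOrd N) ℂ,
      Ps N s (qs N s (Polynomial.C m)) = Polynomial.C m := by
    intro m
    have : qs N s (Polynomial.C m) =
        MvPolynomial.aeval (fun σ : TotalOrd N =>
          (∑ τ ∈ Finset.univ.filter (fun τ => delLast τ = σ), MvPolynomial.X τ)) m := by
      simp [qs, Polynomial.eval₂_C]
    rw [this]
    have : (Ps N s).comp (MvPolynomial.aeval (fun σ : TotalOrd N =>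
          (∑ τ ∈ Finset.univ.filter (fun τ => delLast τ = σ), MvPolynomial.X τ)))
        = Polynomial.CAlgHom.comp
            (MvPolynomial.aeval MvPolynomial.X :
              MvPolynomial (TotalOrd N) ℂ →ₐ[ℂ] MvPolynomial (TotalOrd N) ℂ) := by
      apply MvPolynomial.algHom_ext
      intro σ
      simp only [AlgHom.comp_apply, MvPolynomial.aeval_X]
      rw [partB s σ]
      rfl
    calc Ps N s (MvPolynomial.aeval _ m)
        = ((Ps N s).comp (MvPolynomial.aeval _)) m := rfl
      _ = _ := by rw [this]; simp [Polynomial.CAlgHom]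
  have hX : qs N s Polynomial.X = ∑ τ ∈ Finset.univ.filter
      (fun τ : TotalOrd (N + 1) => prec τ s.castSucc (Fin.last N)), MvPolynomial.X τ := by
    simp [qs]
  have hQ : Q.comp (((Ps N s).toRingHom).comp (qs N s)) = Q := by
    apply Polynomial.ringHom_ext
    · intro a
      simp only [RingHom.comp_apply]
      congr 1
      exact hC a
    · simp only [RingHom.comp_apply, AlgHom.toRingHom_eq_coe, RingHom.coe_coe]
      rw [hX, part1 s]
      rw [map_mul]
      have : Q (Polynomial.C (∑ σ : TotalOrd N, MvPolynomial.X σ)) = 1 := by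
        have hmem : Polynomial.C (∑ σ : TotalOrd N, MvPolynomial.X σ) - 1 ∈ I :=
          Ideal.subset_span rfl
        have := (Ideal.Quotient.eq_zero_iff_mem (I := I)).mpr hmem
        rw [map_sub, sub_eq_zero] at this
        simpa using this
      rw [this]
      exact mul_one (Q Polynomial.X)
  rw [← Ideal.Quotient.eq_zero_iff_mem, map_sub, sub_eq_zero]
  exact DFunLike.congr_fun hQ p

end
end
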